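/- In the algebra E′, the bidegree (5, 67) component E′^{5,67} is a three-dimensional F₂-vector space with basis the classes of H₁(0), h₀³h₅², and h₁D₃(0); moreover the monomial h₀h₁h₄²h₅ equals 0 in E′. (This verifies Ext_A^{5,5+62}(ℤ/2,ℤ/2) = ⟨H₁(0), h₀³h₅², h₁D₃(0)⟩.) -/

import Mathlib

noncomputable section

open MvPolynomial

/-- Generators of Chen's algebra `E′` in homological degrees ≤ 5.
Here `g i` denotes the generator `g_{i+1}` (the family `g` starts at index 1). -/
inductive Gen : Type
  | h (i : ℕ)
  | c (i : ℕ)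
  | d (i : ℕ)
  | e (i : ℕ)
  | f (i : ℕ)
  | g (i : ℕ)
  | p (i : ℕ)
  | D3 (i : ℕ)
  | p' (i : ℕ)
  | P1h1
  | P1h2
  | n (i : ℕ)
  | x (i : ℕ)
  | D1 (i : ℕ)
  | H1 (i : ℕ)
  | Q3 (i : ℕ)
  | K (i : ℕ)
  | J (i : ℕ)
  | T (i : ℕ)
  | V (i : ℕ)
  | V' (i : ℕ)
  | U (i : ℕ)

/-- Homological degree of the generators. -/
def hdeg : Gen → ℕ
  | .h _ => 1
  | .c _ => 3
  | .d _ => 4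
  | .e _ => 4
  | .f _ => 4
  | .g _ => 4
  | .p _ => 4
  | .D3 _ => 4
  | .p' _ => 4
  | _ => 5

/-- Internal degree of the generators. -/
def ideg : Gen → ℕ
  | .h i => 2 ^ i
  | .c i => 2 ^ (i + 3) + 2 ^ (i + 1) + 2 ^ i
  | .d i => 2 ^ (i + 4) + 2 ^ (i + 1)
  | .e i => 2 ^ (i + 4) + 2 ^ (i + 2) + 2 ^ i
  | .f i => 2 ^ (i + 4) + 2 ^ (i + 2) + 2 ^ (i + 1)
  | .g i => 2 ^ (i + 4) + 2 ^ (i + 3)      -- internal degree of `g_{i+1}`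
  | .p i => 2 ^ (i + 5) + 2 ^ (i + 2) + 2 ^ i
  | .D3 i => 2 ^ (i + 6) + 2 ^ i
  | .p' i => 2 ^ (i + 6) + 2 ^ (i + 3) + 2 ^ i
  | .P1h1 => 14
  | .P1h2 => 16
  | .n i => 2 ^ (i + 5) + 2 ^ (i + 2)
  | .x i => 2 ^ (i + 5) + 2 ^ (i + 3) + 2 ^ (i + 1)
  | .D1 i => 2 ^ (i + 5) + 2 ^ (i + 4) + 2 ^ (i + 2) + 2 ^ i
  | .H1 i => 2 ^ (i + 6) + 2 ^ (i + 1) + 2 ^ i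
  | .Q3 i => 2 ^ (i + 6) + 2 ^ (i + 3)
  | .K i => 2 ^ (i + 7) + 2 ^ (i + 1)
  | .J i => 2 ^ (i + 7) + 2 ^ (i + 2) + 2 ^ i
  | .T i => 2 ^ (i + 7) + 2 ^ (i + 4) + 2 ^ (i + 1)
  | .V i => 2 ^ (i + 7) + 2 ^ (i + 5) + 2 ^ i
  | .V' i => 2 ^ (i + 8) + 2 ^ i
  | .U i => 2 ^ (i + 8) + 2 ^ (i + 3) + 2 ^ i

abbrev P := MvPolynomial Gen (ZMod 2)

/-- Chen's relations in homological degrees ≤ 5: the relations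
`hᵢhᵢ₊₁ = 0`, `hᵢhᵢ₊₂² = 0`, `hᵢ²hᵢ₊₃² = 0`, `hᵢ³ = hᵢ₋₁²hᵢ₊₁` (i ≥ 1),
`hⱼcᵢ = 0` for `j ∈ {i-1, i, i+2, i+3}`, together with Chen's 39 families of
degree-5 relations (with `g j` standing for `g_{j+1}`). -/
def rels : Set P :=
  ⋃ j : ℕ,
    ({ X (Gen.h j) * X (Gen.h (j + 1)),
       X (Gen.h j) * X (Gen.h (j + 2)) ^ 2,
       X (Gen.h j) ^ 2 * X (Gen.h (j + 3)) ^ 2,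
       X (Gen.h (j + 1)) ^ 3 - X (Gen.h j) ^ 2 * X (Gen.h (j + 2)),
       X (Gen.h j) * X (Gen.c (j + 1)),
       X (Gen.h j) * X (Gen.c j),
       X (Gen.h (j + 2)) * X (Gen.c j),
       X (Gen.h (j + 3)) * X (Gen.c j),
       -- Chen's degree-5 relations:
       X (Gen.h (j + 4)) ^ 2 * X (Gen.c j),
       X (Gen.h (j + 3)) * X (Gen.h j) * X (Gen.c (j + 2)),
       X (Gen.h (j + 1)) ^ 2 * X (Gen.c j),
       X (Gen.h j) * X (Gen.d (j + 1)),
       X (Gen.h (j + 3)) * X (Gen.d j),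
       X (Gen.h (j + 4)) * X (Gen.d j),
       X (Gen.h j) * X (Gen.e (j + 1)),
       X (Gen.h (j + 4)) * X (Gen.e j),
       X (Gen.h (j + 1)) * X (Gen.f j),
       X (Gen.h (j + 3)) * X (Gen.f j),
       X (Gen.h (j + 4)) * X (Gen.f j),
       X (Gen.h (j + 3)) * X (Gen.g j),
       X (Gen.h j) * X (Gen.p (j + 1)),
       X (Gen.h (j + 1)) * X (Gen.p j),
       X (Gen.h (j + 2)) * X (Gen.p j),
       X (Gen.h (j + 4)) * X (Gen.p j),
       X (Gen.h (j + 5)) * X (Gen.p j),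
       X (Gen.h j) * X (Gen.D3 (j + 1)),
       X (Gen.h j) * X (Gen.D3 j),
       X (Gen.h (j + 5)) * X (Gen.D3 j),
       X (Gen.h (j + 6)) * X (Gen.D3 j),
       X (Gen.h j) * X (Gen.p' (j + 1)),
       X (Gen.h (j + 2)) * X (Gen.p' j),
       X (Gen.h (j + 3)) * X (Gen.p' j),
       X (Gen.h (j + 6)) * X (Gen.p' j),
       X (Gen.h (j + 4)) * X (Gen.h (j + 1)) * X (Gen.c j) - X (Gen.h (j + 3)) * X (Gen.e j),
       X (Gen.h (j + 4)) * X (Gen.h j) * X (Gen.c (j + 3)) - X (Gen.h (j + 5)) * X (Gen.p' j),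
       X (Gen.h (j + 5)) ^ 2 * X (Gen.c j) - X (Gen.h (j + 1)) * X (Gen.p' j),
       X (Gen.h j) * X (Gen.d (j + 2)) - X (Gen.h (j + 3)) * X (Gen.D3 j),
       X (Gen.h (j + 1)) * X (Gen.d (j + 1)) - X (Gen.h j) * X (Gen.p j),
       X (Gen.h (j + 2)) * X (Gen.d (j + 1)) - X (Gen.h (j + 4)) * X (Gen.g j),
       X (Gen.h (j + 2)) * X (Gen.d j) - X (Gen.h j) * X (Gen.e j),
       X (Gen.h (j + 1)) * X (Gen.e j) - X (Gen.h j) * X (Gen.f j),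
       X (Gen.h (j + 2)) * X (Gen.e (j + 1)) - X (Gen.h j) ^ 2 * X (Gen.c (j + 2)),
       X (Gen.h (j + 2)) * X (Gen.e j) - X (Gen.h j) * X (Gen.g j),
       X (Gen.h j) * X (Gen.f (j + 2)) - X (Gen.h (j + 4)) * X (Gen.p' j),
       X (Gen.h j) * X (Gen.f (j + 1)) - X (Gen.h (j + 3)) * X (Gen.p j),
       X (Gen.h (j + 2)) * X (Gen.f j) - X (Gen.h (j + 1)) * X (Gen.g j),
       X (Gen.h (j + 3)) * X (Gen.g (j + 1)) - X (Gen.h (j + 5)) * X (Gen.g j) } : Set P)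

def relIdeal : Ideal P := Ideal.span rels

/-- Chen's algebra `E′`, isomorphic to `Ext_A^{k,*}(ℤ/2, ℤ/2)` in homological degrees `k ≤ 5`. -/
abbrev E' := P ⧸ relIdeal

def mkE : P →ₐ[ZMod 2] E' := Ideal.Quotient.mkₐ (ZMod 2) relIdeal

/-- The bidegree `(k, d)` component `E′^{k,d}` of `E′`: the image of the space of polynomials
that are weighted homogeneous of homological degree `k` and internal degree `d`. -/
def component (k d : ℕ) : Submodule (ZMod 2) E' :=
  Submodule.map mkE.toLinearMap
    (weightedHomogeneousSubmodule (ZMod 2) hdeg k ⊓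
      weightedHomogeneousSubmodule (ZMod 2) ideg d)

deriving instance DecidableEq for Gen
@[simp] lemma hdeg_h (i : ℕ) : hdeg (Gen.h i) = 1 := rfl
@[simp] lemma hdeg_c (i : ℕ) : hdeg (Gen.c i) = 3 := rfl
@[simp] lemma hdeg_d (i : ℕ) : hdeg (Gen.d i) = 4 := rfl
@[simp] lemma hdeg_e (i : ℕ) : hdeg (Gen.e i) = 4 := rfl
@[simp] lemma hdeg_f (i : ℕ) : hdeg (Gen.f i) = 4 := rfl
@[simp] lemma hdeg_g (i : ℕ) : hdeg (Gen.g i) = 4 := rfl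
@[simp] lemma hdeg_p (i : ℕ) : hdeg (Gen.p i) = 4 := rfl
@[simp] lemma hdeg_D3 (i : ℕ) : hdeg (Gen.D3 i) = 4 := rfl
@[simp] lemma hdeg_pq (i : ℕ) : hdeg (Gen.p' i) = 4 := rfl
@[simp] lemma hdeg_n (i : ℕ) : hdeg (Gen.n i) = 5 := rfl
@[simp] lemma hdeg_x (i : ℕ) : hdeg (Gen.x i) = 5 := rfl
@[simp] lemma hdeg_D1 (i : ℕ) : hdeg (Gen.D1 i) = 5 := rfl
@[simp] lemma hdeg_H1 (i : ℕ) : hdeg (Gen.H1 i) = 5 := rfl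
@[simp] lemma hdeg_Q3 (i : ℕ) : hdeg (Gen.Q3 i) = 5 := rfl
@[simp] lemma hdeg_K (i : ℕ) : hdeg (Gen.K i) = 5 := rfl
@[simp] lemma hdeg_J (i : ℕ) : hdeg (Gen.J i) = 5 := rfl
@[simp] lemma hdeg_T (i : ℕ) : hdeg (Gen.T i) = 5 := rfl
@[simp] lemma hdeg_V (i : ℕ) : hdeg (Gen.V i) = 5 := rfl
@[simp] lemma hdeg_Vq (i : ℕ) : hdeg (Gen.V' i) = 5 := rfl
@[simp] lemma hdeg_U (i : ℕ) : hdeg (Gen.U i) = 5 := rfl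
@[simp] lemma hdeg_P1h1 : hdeg Gen.P1h1 = 5 := rfl
@[simp] lemma hdeg_P1h2 : hdeg Gen.P1h2 = 5 := rfl
@[simp] lemma ideg_h (i : ℕ) : ideg (Gen.h i) = 2 ^ i := rfl
@[simp] lemma ideg_c (i : ℕ) : ideg (Gen.c i) = 2 ^ (i + 3) + 2 ^ (i + 1) + 2 ^ i := rfl
@[simp] lemma ideg_d (i : ℕ) : ideg (Gen.d i) = 2 ^ (i + 4) + 2 ^ (i + 1) := rfl
@[simp] lemma ideg_e (i : ℕ) : ideg (Gen.e i) = 2 ^ (i + 4) + 2 ^ (i + 2) + 2 ^ i := rfl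
@[simp] lemma ideg_f (i : ℕ) : ideg (Gen.f i) = 2 ^ (i + 4) + 2 ^ (i + 2) + 2 ^ (i + 1) := rfl
@[simp] lemma ideg_g (i : ℕ) : ideg (Gen.g i) = 2 ^ (i + 4) + 2 ^ (i + 3) := rfl
@[simp] lemma ideg_p (i : ℕ) : ideg (Gen.p i) = 2 ^ (i + 5) + 2 ^ (i + 2) + 2 ^ i := rfl
@[simp] lemma ideg_D3 (i : ℕ) : ideg (Gen.D3 i) = 2 ^ (i + 6) + 2 ^ i := rfl
@[simp] lemma ideg_pq (i : ℕ) : ideg (Gen.p' i) = 2 ^ (i + 6) + 2 ^ (i + 3) + 2 ^ i := rfl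
@[simp] lemma ideg_n (i : ℕ) : ideg (Gen.n i) = 2 ^ (i + 5) + 2 ^ (i + 2) := rfl
@[simp] lemma ideg_x (i : ℕ) : ideg (Gen.x i) = 2 ^ (i + 5) + 2 ^ (i + 3) + 2 ^ (i + 1) := rfl
@[simp] lemma ideg_D1 (i : ℕ) : ideg (Gen.D1 i) = 2 ^ (i + 5) + 2 ^ (i + 4) + 2 ^ (i + 2) + 2 ^ i := rfl
@[simp] lemma ideg_H1 (i : ℕ) : ideg (Gen.H1 i) = 2 ^ (i + 6) + 2 ^ (i + 1) + 2 ^ i := rfl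
@[simp] lemma ideg_Q3 (i : ℕ) : ideg (Gen.Q3 i) = 2 ^ (i + 6) + 2 ^ (i + 3) := rfl
@[simp] lemma ideg_K (i : ℕ) : ideg (Gen.K i) = 2 ^ (i + 7) + 2 ^ (i + 1) := rfl
@[simp] lemma ideg_J (i : ℕ) : ideg (Gen.J i) = 2 ^ (i + 7) + 2 ^ (i + 2) + 2 ^ i := rfl
@[simp] lemma ideg_T (i : ℕ) : ideg (Gen.T i) = 2 ^ (i + 7) + 2 ^ (i + 4) + 2 ^ (i + 1) := rfl
@[simp] lemma ideg_V (i : ℕ) : ideg (Gen.V i) = 2 ^ (i + 7) + 2 ^ (i + 5) + 2 ^ i := rfl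
@[simp] lemma ideg_Vq (i : ℕ) : ideg (Gen.V' i) = 2 ^ (i + 8) + 2 ^ i := rfl
@[simp] lemma ideg_U (i : ℕ) : ideg (Gen.U i) = 2 ^ (i + 8) + 2 ^ (i + 3) + 2 ^ i := rfl
@[simp] lemma ideg_P1h1 : ideg Gen.P1h1 = 14 := rfl
@[simp] lemma ideg_P1h2 : ideg Gen.P1h2 = 16 := rfl

lemma exp7 {a : ℕ} (h : 2 ^ a ≤ 67) : a < 7 := by
  by_contra hc
  push_neg at hc
  have h2 : (2:ℕ) ^ 7 ≤ 2 ^ a := Nat.pow_le_pow_right (by norm_num) hc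
  norm_num at h2
  omega

lemma caseD : ∀ a b c d e : Fin 7, 2^a.1+2^b.1+2^c.1+2^d.1+2^e.1 = 67 →
    ({a.1,b.1,c.1,d.1,e.1} : Multiset ℕ) = {0,0,0,5,5} ∨
    ({a.1,b.1,c.1,d.1,e.1} : Multiset ℕ) = {0,1,4,4,5} := by decide

lemma caseC : ∀ i a b : Fin 7, 11*2^i.1 + 2^a.1 + 2^b.1 ≠ 67 := by decide
lemma no18 : ∀ i a : Fin 7, 18*2^i.1 + 2^a.1 ≠ 67 := by decide
lemma no21 : ∀ i a : Fin 7, 21*2^i.1 + 2^a.1 ≠ 67 := by decide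
lemma no22 : ∀ i a : Fin 7, 22*2^i.1 + 2^a.1 ≠ 67 := by decide
lemma no24 : ∀ i a : Fin 7, 24*2^i.1 + 2^a.1 ≠ 67 := by decide
lemma no37 : ∀ i a : Fin 7, 37*2^i.1 + 2^a.1 ≠ 67 := by decide
lemma no73 : ∀ i a : Fin 7, 73*2^i.1 + 2^a.1 ≠ 67 := by decide
lemma caseB65 : ∀ i a : Fin 7, 65*2^i.1+2^a.1 = 67 → i.1 = 0 ∧ a.1 = 1 := by decide

lemma hdeg_pos (g : Gen) : 1 ≤ hdeg g := by cases g <;> simp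
lemma hdeg_cases (g : Gen) : hdeg g = 1 ∨ hdeg g = 3 ∨ hdeg g = 4 ∨ hdeg g = 5 := by
  cases g <;> simp
lemma hdeg_one {g : Gen} (h : hdeg g = 1) : ∃ i, g = Gen.h i := by
  cases g <;> simp_all

lemma card_le_sumh (m : Multiset Gen) : Multiset.card m ≤ (m.map hdeg).sum := by
  induction m using Multiset.induction with
  | empty => simp
  | cons a s ih =>
    simp only [Multiset.map_cons, Multiset.sum_cons, Multiset.card_cons]
    have := hdeg_pos a
    omega

lemma sum_eq_one {m : Multiset Gen} (h : (m.map hdeg).sum = 1) : ∃ a, m = {Gen.h a} := by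
  have hc := card_le_sumh m
  rw [h] at hc
  have : Multiset.card m = 0 ∨ Multiset.card m = 1 := by omega
  rcases this with h0 | h1
  · rw [Multiset.card_eq_zero] at h0
    subst h0; simp at h
  · obtain ⟨g, rfl⟩ := Multiset.card_eq_one.mp h1
    simp only [Multiset.map_singleton, Multiset.sum_singleton] at h
    obtain ⟨i, rfl⟩ := hdeg_one h
    exact ⟨i, rfl⟩

lemma sum_eq_two {m : Multiset Gen} (h : (m.map hdeg).sum = 2) :
    ∃ a b, m = {Gen.h a, Gen.h b} := by
  have hc := card_le_sumh m
  rw [h] at hc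
  have : Multiset.card m = 0 ∨ Multiset.card m = 1 ∨ Multiset.card m = 2 := by omega
  rcases this with h0 | h1 | h2
  · rw [Multiset.card_eq_zero] at h0
    subst h0; simp at h
  · obtain ⟨g, rfl⟩ := Multiset.card_eq_one.mp h1
    simp only [Multiset.map_singleton, Multiset.sum_singleton] at h
    rcases hdeg_cases g with h' | h' | h' | h' <;> omega
  · obtain ⟨g1, g2, rfl⟩ := Multiset.card_eq_two.mp h2
    simp only [Multiset.insert_eq_cons, Multiset.map_cons, Multiset.sum_cons,
      Multiset.map_singleton, Multiset.sum_singleton] at h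
    have e1 : hdeg g1 = 1 := by
      rcases hdeg_cases g1 with h' | h' | h' | h' <;> rcases hdeg_cases g2 with h'' | h'' | h'' | h'' <;> omega
    have e2 : hdeg g2 = 1 := by
      rcases hdeg_cases g1 with h' | h' | h' | h' <;> rcases hdeg_cases g2 with h'' | h'' | h'' | h'' <;> omega
    obtain ⟨a, rfl⟩ := hdeg_one e1
    obtain ⟨b, rfl⟩ := hdeg_one e2
    exact ⟨a, b, rfl⟩

lemma exists_cons {α : Type*} [DecidableEq α] {m : Multiset α} {n : ℕ}
    (h : Multiset.card m = n + 1) :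
    ∃ a m', m = a ::ₘ m' ∧ Multiset.card m' = n := by
  have hm : ∃ a, a ∈ m := Multiset.card_pos_iff_exists_mem.mp (by omega)
  obtain ⟨a, ha⟩ := hm
  refine ⟨a, m.erase a, (Multiset.cons_erase ha).symm, ?_⟩
  simp [Multiset.card_erase_of_mem ha, h]

lemma allh {m : Multiset Gen} (h : ∀ g ∈ m, ∃ i, g = Gen.h i) :
    ∃ s : Multiset ℕ, m = s.map Gen.h := by
  induction m using Multiset.induction with
  | empty => exact ⟨0, rfl⟩
  | cons a t ih =>
    obtain ⟨i, rfl⟩ := h a (Multiset.mem_cons_self a t)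
    obtain ⟨s, rfl⟩ := ih (fun g hg => h g (Multiset.mem_cons_of_mem hg))
    exact ⟨i ::ₘ s, by simp⟩

lemma one_le_two_pow' (i : ℕ) : 1 ≤ 2 ^ i := Nat.one_le_two_pow

lemma sum_hdeg_h (s : Multiset ℕ) : (s.map (hdeg ∘ Gen.h)).sum = Multiset.card s := by
  induction s using Multiset.induction with
  | empty => simp
  | cons a t ih =>
    rw [Multiset.map_cons, Multiset.sum_cons, ih, Multiset.card_cons]
    simp [Function.comp, Nat.add_comm]

lemma pow2_one {i : ℕ} (hp1 : 2 ^ i = 1) : i = 0 := by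
  rcases i with _ | k
  · rfl
  · exfalso
    rw [pow_succ] at hp1
    obtain ⟨t, ht⟩ : ∃ t, (2:ℕ)^k = t := ⟨_, rfl⟩
    rw [ht] at hp1
    have h1 : 1 ≤ t := by rw [← ht]; exact one_le_two_pow' k
    omega

lemma classify (m : Multiset Gen) (h5 : (m.map hdeg).sum = 5) (h67 : (m.map ideg).sum = 67) :
    m = {Gen.H1 0} ∨ m = {Gen.D3 0, Gen.h 1} ∨
    m = Multiset.map Gen.h {0, 0, 0, 5, 5} ∨ m = Multiset.map Gen.h {0, 1, 4, 4, 5} := by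
  by_cases hA : ∃ g ∈ m, 3 ≤ hdeg g
  · obtain ⟨g, hg, hg3⟩ := hA
    have hm : m = g ::ₘ m.erase g := (Multiset.cons_erase hg).symm
    rw [hm, Multiset.map_cons, Multiset.sum_cons] at h5 h67
    set m' := m.erase g with hm'def
    cases g with
    | h i => simp at hg3
    | c i =>
      have hs : (m'.map hdeg).sum = 2 := by simp at h5; omega
      obtain ⟨a, b, hab⟩ := sum_eq_two hs
      rw [hab] at h67
      simp only [ideg_c, Multiset.insert_eq_cons, Multiset.map_cons, Multiset.sum_cons,
        Multiset.map_singleton, Multiset.sum_singleton, ideg_h] at h67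
      have e : 2^(i+3) + 2^(i+1) + 2^i = 11 * 2^i := by ring
      rw [e] at h67
      obtain ⟨ti, hti⟩ : ∃ t, (2:ℕ)^i = t := ⟨_, rfl⟩
      obtain ⟨ta, hta⟩ : ∃ t, (2:ℕ)^a = t := ⟨_, rfl⟩
      obtain ⟨tb, htb⟩ : ∃ t, (2:ℕ)^b = t := ⟨_, rfl⟩
      rw [hti, hta, htb] at h67
      have t1 : 1 ≤ ti := by rw [← hti]; exact one_le_two_pow' i
      have t2 : 1 ≤ ta := by rw [← hta]; exact one_le_two_pow' a
      have t3 : 1 ≤ tb := by rw [← htb]; exact one_le_two_pow' b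
      have hi : i < 7 := by apply exp7; rw [hti]; omega
      have ha : a < 7 := by apply exp7; rw [hta]; omega
      have hb : b < 7 := by apply exp7; rw [htb]; omega
      have hn := caseC ⟨i, hi⟩ ⟨a, ha⟩ ⟨b, hb⟩
      simp only [Fin.val_mk] at hn
      rw [hti, hta, htb] at hn
      omega
    | d i =>
      have hs : (m'.map hdeg).sum = 1 := by simp at h5; omega
      obtain ⟨a, hab⟩ := sum_eq_one hs
      rw [hab] at h67
      simp only [ideg_d, Multiset.map_singleton, Multiset.sum_singleton, ideg_h] at h67
      have e : 2^(i+4) + 2^(i+1) = 18 * 2^i := by ring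
      rw [e] at h67
      obtain ⟨ti, hti⟩ : ∃ t, (2:ℕ)^i = t := ⟨_, rfl⟩
      obtain ⟨ta, hta⟩ : ∃ t, (2:ℕ)^a = t := ⟨_, rfl⟩
      rw [hti, hta] at h67
      have t1 : 1 ≤ ti := by rw [← hti]; exact one_le_two_pow' i
      have t2 : 1 ≤ ta := by rw [← hta]; exact one_le_two_pow' a
      have hi : i < 7 := by apply exp7; rw [hti]; omega
      have ha : a < 7 := by apply exp7; rw [hta]; omega
      have hn := no18 ⟨i, hi⟩ ⟨a, ha⟩
      simp only [Fin.val_mk] at hn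
      rw [hti, hta] at hn
      omega
    | e i =>
      have hs : (m'.map hdeg).sum = 1 := by simp at h5; omega
      obtain ⟨a, hab⟩ := sum_eq_one hs
      rw [hab] at h67
      simp only [ideg_e, Multiset.map_singleton, Multiset.sum_singleton, ideg_h] at h67
      have e : 2^(i+4) + 2^(i+2) + 2^i = 21 * 2^i := by ring
      rw [e] at h67
      obtain ⟨ti, hti⟩ : ∃ t, (2:ℕ)^i = t := ⟨_, rfl⟩
      obtain ⟨ta, hta⟩ : ∃ t, (2:ℕ)^a = t := ⟨_, rfl⟩
      rw [hti, hta] at h67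
      have t1 : 1 ≤ ti := by rw [← hti]; exact one_le_two_pow' i
      have t2 : 1 ≤ ta := by rw [← hta]; exact one_le_two_pow' a
      have hi : i < 7 := by apply exp7; rw [hti]; omega
      have ha : a < 7 := by apply exp7; rw [hta]; omega
      have hn := no21 ⟨i, hi⟩ ⟨a, ha⟩
      simp only [Fin.val_mk] at hn
      rw [hti, hta] at hn
      omega
    | f i =>
      have hs : (m'.map hdeg).sum = 1 := by simp at h5; omega
      obtain ⟨a, hab⟩ := sum_eq_one hs
      rw [hab] at h67
      simp only [ideg_f, Multiset.map_singleton, Multiset.sum_singleton, ideg_h] at h67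
      have e : 2^(i+4) + 2^(i+2) + 2^(i+1) = 22 * 2^i := by ring
      rw [e] at h67
      obtain ⟨ti, hti⟩ : ∃ t, (2:ℕ)^i = t := ⟨_, rfl⟩
      obtain ⟨ta, hta⟩ : ∃ t, (2:ℕ)^a = t := ⟨_, rfl⟩
      rw [hti, hta] at h67
      have t1 : 1 ≤ ti := by rw [← hti]; exact one_le_two_pow' i
      have t2 : 1 ≤ ta := by rw [← hta]; exact one_le_two_pow' a
      have hi : i < 7 := by apply exp7; rw [hti]; omega
      have ha : a < 7 := by apply exp7; rw [hta]; omega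
      have hn := no22 ⟨i, hi⟩ ⟨a, ha⟩
      simp only [Fin.val_mk] at hn
      rw [hti, hta] at hn
      omega
    | g i =>
      have hs : (m'.map hdeg).sum = 1 := by simp at h5; omega
      obtain ⟨a, hab⟩ := sum_eq_one hs
      rw [hab] at h67
      simp only [ideg_g, Multiset.map_singleton, Multiset.sum_singleton, ideg_h] at h67
      have e : 2^(i+4) + 2^(i+3) = 24 * 2^i := by ring
      rw [e] at h67
      obtain ⟨ti, hti⟩ : ∃ t, (2:ℕ)^i = t := ⟨_, rfl⟩
      obtain ⟨ta, hta⟩ : ∃ t, (2:ℕ)^a = t := ⟨_, rfl⟩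
      rw [hti, hta] at h67
      have t1 : 1 ≤ ti := by rw [← hti]; exact one_le_two_pow' i
      have t2 : 1 ≤ ta := by rw [← hta]; exact one_le_two_pow' a
      have hi : i < 7 := by apply exp7; rw [hti]; omega
      have ha : a < 7 := by apply exp7; rw [hta]; omega
      have hn := no24 ⟨i, hi⟩ ⟨a, ha⟩
      simp only [Fin.val_mk] at hn
      rw [hti, hta] at hn
      omega
    | p i =>
      have hs : (m'.map hdeg).sum = 1 := by simp at h5; omega
      obtain ⟨a, hab⟩ := sum_eq_one hs
      rw [hab] at h67
      simp only [ideg_p, Multiset.map_singleton, Multiset.sum_singleton, ideg_h] at h67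
      have e : 2^(i+5) + 2^(i+2) + 2^i = 37 * 2^i := by ring
      rw [e] at h67
      obtain ⟨ti, hti⟩ : ∃ t, (2:ℕ)^i = t := ⟨_, rfl⟩
      obtain ⟨ta, hta⟩ : ∃ t, (2:ℕ)^a = t := ⟨_, rfl⟩
      rw [hti, hta] at h67
      have t1 : 1 ≤ ti := by rw [← hti]; exact one_le_two_pow' i
      have t2 : 1 ≤ ta := by rw [← hta]; exact one_le_two_pow' a
      have hi : i < 7 := by apply exp7; rw [hti]; omega
      have ha : a < 7 := by apply exp7; rw [hta]; omega
      have hn := no37 ⟨i, hi⟩ ⟨a, ha⟩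
      simp only [Fin.val_mk] at hn
      rw [hti, hta] at hn
      omega
    | p' i =>
      have hs : (m'.map hdeg).sum = 1 := by simp at h5; omega
      obtain ⟨a, hab⟩ := sum_eq_one hs
      rw [hab] at h67
      simp only [ideg_pq, Multiset.map_singleton, Multiset.sum_singleton, ideg_h] at h67
      have e : 2^(i+6) + 2^(i+3) + 2^i = 73 * 2^i := by ring
      rw [e] at h67
      obtain ⟨ti, hti⟩ : ∃ t, (2:ℕ)^i = t := ⟨_, rfl⟩
      obtain ⟨ta, hta⟩ : ∃ t, (2:ℕ)^a = t := ⟨_, rfl⟩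
      rw [hti, hta] at h67
      have t1 : 1 ≤ ti := by rw [← hti]; exact one_le_two_pow' i
      have t2 : 1 ≤ ta := by rw [← hta]; exact one_le_two_pow' a
      have hi : i < 7 := by apply exp7; rw [hti]; omega
      have ha : a < 7 := by apply exp7; rw [hta]; omega
      have hn := no73 ⟨i, hi⟩ ⟨a, ha⟩
      simp only [Fin.val_mk] at hn
      rw [hti, hta] at hn
      omega
    | D3 i =>
      have hs : (m'.map hdeg).sum = 1 := by simp at h5; omega
      obtain ⟨a, hab⟩ := sum_eq_one hs
      rw [hab] at h67
      simp only [ideg_D3, Multiset.map_singleton, Multiset.sum_singleton, ideg_h] at h67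
      have e : 2^(i+6) + 2^i = 65 * 2^i := by ring
      rw [e] at h67
      obtain ⟨ti, hti⟩ : ∃ t, (2:ℕ)^i = t := ⟨_, rfl⟩
      obtain ⟨ta, hta⟩ : ∃ t, (2:ℕ)^a = t := ⟨_, rfl⟩
      rw [hti, hta] at h67
      have t1 : 1 ≤ ti := by rw [← hti]; exact one_le_two_pow' i
      have t2 : 1 ≤ ta := by rw [← hta]; exact one_le_two_pow' a
      have hi : i < 7 := by apply exp7; rw [hti]; omega
      have ha : a < 7 := by apply exp7; rw [hta]; omega
      have harg : 65 * 2^i + 2^a = 67 := by rw [hti, hta]; omega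
      have hn := caseB65 ⟨i, hi⟩ ⟨a, ha⟩ (by simpa using harg)
      simp only [Fin.val_mk] at hn
      obtain ⟨hi0, ha1⟩ := hn
      subst hi0
      subst ha1
      right; left
      rw [hm, hab]
      rfl
    | P1h1 =>
      have hs : (m'.map hdeg).sum = 0 := by simp at h5; omega
      have hcle := card_le_sumh m'
      rw [hs] at hcle
      have hz : m' = 0 := Multiset.card_eq_zero.mp (by omega)
      rw [hz] at h67
      simp only [ideg_P1h1, Multiset.map_zero, Multiset.sum_zero, add_zero] at h67
      omega
    | P1h2 =>
      have hs : (m'.map hdeg).sum = 0 := by simp at h5; omega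
      have hcle := card_le_sumh m'
      rw [hs] at hcle
      have hz : m' = 0 := Multiset.card_eq_zero.mp (by omega)
      rw [hz] at h67
      simp only [ideg_P1h2, Multiset.map_zero, Multiset.sum_zero, add_zero] at h67
      omega
    | n i =>
      have hs : (m'.map hdeg).sum = 0 := by simp at h5; omega
      have hcle := card_le_sumh m'
      rw [hs] at hcle
      have hz : m' = 0 := Multiset.card_eq_zero.mp (by omega)
      rw [hz] at h67
      simp only [ideg_n, Multiset.map_zero, Multiset.sum_zero, add_zero] at h67
      have e : 2^(i+5) + 2^(i+2) = 36 * 2^i := by ring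
      rw [e] at h67
      obtain ⟨ti, hti⟩ : ∃ t, (2:ℕ)^i = t := ⟨_, rfl⟩
      rw [hti] at h67
      have t1 : 1 ≤ ti := by rw [← hti]; exact one_le_two_pow' i
      omega
    | x i =>
      have hs : (m'.map hdeg).sum = 0 := by simp at h5; omega
      have hcle := card_le_sumh m'
      rw [hs] at hcle
      have hz : m' = 0 := Multiset.card_eq_zero.mp (by omega)
      rw [hz] at h67
      simp only [ideg_x, Multiset.map_zero, Multiset.sum_zero, add_zero] at h67
      have e : 2^(i+5) + 2^(i+3) + 2^(i+1) = 42 * 2^i := by ring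
      rw [e] at h67
      obtain ⟨ti, hti⟩ : ∃ t, (2:ℕ)^i = t := ⟨_, rfl⟩
      rw [hti] at h67
      have t1 : 1 ≤ ti := by rw [← hti]; exact one_le_two_pow' i
      omega
    | D1 i =>
      have hs : (m'.map hdeg).sum = 0 := by simp at h5; omega
      have hcle := card_le_sumh m'
      rw [hs] at hcle
      have hz : m' = 0 := Multiset.card_eq_zero.mp (by omega)
      rw [hz] at h67
      simp only [ideg_D1, Multiset.map_zero, Multiset.sum_zero, add_zero] at h67
      have e : 2^(i+5) + 2^(i+4) + 2^(i+2) + 2^i = 53 * 2^i := by ring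
      rw [e] at h67
      obtain ⟨ti, hti⟩ : ∃ t, (2:ℕ)^i = t := ⟨_, rfl⟩
      rw [hti] at h67
      have t1 : 1 ≤ ti := by rw [← hti]; exact one_le_two_pow' i
      omega
    | Q3 i =>
      have hs : (m'.map hdeg).sum = 0 := by simp at h5; omega
      have hcle := card_le_sumh m'
      rw [hs] at hcle
      have hz : m' = 0 := Multiset.card_eq_zero.mp (by omega)
      rw [hz] at h67
      simp only [ideg_Q3, Multiset.map_zero, Multiset.sum_zero, add_zero] at h67
      have e : 2^(i+6) + 2^(i+3) = 72 * 2^i := by ring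
      rw [e] at h67
      obtain ⟨ti, hti⟩ : ∃ t, (2:ℕ)^i = t := ⟨_, rfl⟩
      rw [hti] at h67
      have t1 : 1 ≤ ti := by rw [← hti]; exact one_le_two_pow' i
      omega
    | K i =>
      have hs : (m'.map hdeg).sum = 0 := by simp at h5; omega
      have hcle := card_le_sumh m'
      rw [hs] at hcle
      have hz : m' = 0 := Multiset.card_eq_zero.mp (by omega)
      rw [hz] at h67
      simp only [ideg_K, Multiset.map_zero, Multiset.sum_zero, add_zero] at h67
      have e : 2^(i+7) + 2^(i+1) = 130 * 2^i := by ring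
      rw [e] at h67
      obtain ⟨ti, hti⟩ : ∃ t, (2:ℕ)^i = t := ⟨_, rfl⟩
      rw [hti] at h67
      have t1 : 1 ≤ ti := by rw [← hti]; exact one_le_two_pow' i
      omega
    | J i =>
      have hs : (m'.map hdeg).sum = 0 := by simp at h5; omega
      have hcle := card_le_sumh m'
      rw [hs] at hcle
      have hz : m' = 0 := Multiset.card_eq_zero.mp (by omega)
      rw [hz] at h67
      simp only [ideg_J, Multiset.map_zero, Multiset.sum_zero, add_zero] at h67
      have e : 2^(i+7) + 2^(i+2) + 2^i = 133 * 2^i := by ring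
      rw [e] at h67
      obtain ⟨ti, hti⟩ : ∃ t, (2:ℕ)^i = t := ⟨_, rfl⟩
      rw [hti] at h67
      have t1 : 1 ≤ ti := by rw [← hti]; exact one_le_two_pow' i
      omega
    | T i =>
      have hs : (m'.map hdeg).sum = 0 := by simp at h5; omega
      have hcle := card_le_sumh m'
      rw [hs] at hcle
      have hz : m' = 0 := Multiset.card_eq_zero.mp (by omega)
      rw [hz] at h67
      simp only [ideg_T, Multiset.map_zero, Multiset.sum_zero, add_zero] at h67
      have e : 2^(i+7) + 2^(i+4) + 2^(i+1) = 146 * 2^i := by ring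
      rw [e] at h67
      obtain ⟨ti, hti⟩ : ∃ t, (2:ℕ)^i = t := ⟨_, rfl⟩
      rw [hti] at h67
      have t1 : 1 ≤ ti := by rw [← hti]; exact one_le_two_pow' i
      omega
    | V i =>
      have hs : (m'.map hdeg).sum = 0 := by simp at h5; omega
      have hcle := card_le_sumh m'
      rw [hs] at hcle
      have hz : m' = 0 := Multiset.card_eq_zero.mp (by omega)
      rw [hz] at h67
      simp only [ideg_V, Multiset.map_zero, Multiset.sum_zero, add_zero] at h67
      have e : 2^(i+7) + 2^(i+5) + 2^i = 161 * 2^i := by ring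
      rw [e] at h67
      obtain ⟨ti, hti⟩ : ∃ t, (2:ℕ)^i = t := ⟨_, rfl⟩
      rw [hti] at h67
      have t1 : 1 ≤ ti := by rw [← hti]; exact one_le_two_pow' i
      omega
    | V' i =>
      have hs : (m'.map hdeg).sum = 0 := by simp at h5; omega
      have hcle := card_le_sumh m'
      rw [hs] at hcle
      have hz : m' = 0 := Multiset.card_eq_zero.mp (by omega)
      rw [hz] at h67
      simp only [ideg_Vq, Multiset.map_zero, Multiset.sum_zero, add_zero] at h67
      have e : 2^(i+8) + 2^i = 257 * 2^i := by ring
      rw [e] at h67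
      obtain ⟨ti, hti⟩ : ∃ t, (2:ℕ)^i = t := ⟨_, rfl⟩
      rw [hti] at h67
      have t1 : 1 ≤ ti := by rw [← hti]; exact one_le_two_pow' i
      omega
    | U i =>
      have hs : (m'.map hdeg).sum = 0 := by simp at h5; omega
      have hcle := card_le_sumh m'
      rw [hs] at hcle
      have hz : m' = 0 := Multiset.card_eq_zero.mp (by omega)
      rw [hz] at h67
      simp only [ideg_U, Multiset.map_zero, Multiset.sum_zero, add_zero] at h67
      have e : 2^(i+8) + 2^(i+3) + 2^i = 265 * 2^i := by ring
      rw [e] at h67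
      obtain ⟨ti, hti⟩ : ∃ t, (2:ℕ)^i = t := ⟨_, rfl⟩
      rw [hti] at h67
      have t1 : 1 ≤ ti := by rw [← hti]; exact one_le_two_pow' i
      omega
    | H1 i =>
      have hs : (m'.map hdeg).sum = 0 := by simp at h5; omega
      have hcle := card_le_sumh m'
      rw [hs] at hcle
      have hz : m' = 0 := Multiset.card_eq_zero.mp (by omega)
      rw [hz] at h67
      simp only [ideg_H1, Multiset.map_zero, Multiset.sum_zero, add_zero] at h67
      have e : 2^(i+6) + 2^(i+1) + 2^i = 67 * 2^i := by ring
      rw [e] at h67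
      obtain ⟨ti, hti⟩ : ∃ t, (2:ℕ)^i = t := ⟨_, rfl⟩
      rw [hti] at h67
      have t1 : 1 ≤ ti := by rw [← hti]; exact one_le_two_pow' i
      have hp1 : 2^i = 1 := by rw [hti]; omega
      have hi0 : i = 0 := pow2_one hp1
      subst hi0
      left
      rw [hm, hz]
      rfl
  · push_neg at hA
    have hall : ∀ g ∈ m, ∃ i, g = Gen.h i := by
      intro g hg
      refine hdeg_one ?_
      have := hA g hg
      rcases hdeg_cases g with h' | h' | h' | h' <;> omega
    obtain ⟨s, rfl⟩ := allh hall
    rw [Multiset.map_map] at h5 h67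
    rw [sum_hdeg_h] at h5
    obtain ⟨a, s1, rfl, hc1⟩ := exists_cons h5
    obtain ⟨b, s2, rfl, hc2⟩ := exists_cons hc1
    obtain ⟨c, s3, rfl, hc3⟩ := exists_cons hc2
    obtain ⟨d, s4, rfl, hc4⟩ := exists_cons hc3
    obtain ⟨e, s5, rfl, hc5⟩ := exists_cons hc4
    have hz : s5 = 0 := Multiset.card_eq_zero.mp hc5
    subst hz
    simp only [Multiset.map_cons, Multiset.sum_cons, Function.comp_apply, ideg_h,
      Multiset.map_zero, Multiset.sum_zero, add_zero] at h67
    obtain ⟨ta, hta⟩ : ∃ t, (2:ℕ)^a = t := ⟨_, rfl⟩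
    obtain ⟨tb, htb⟩ : ∃ t, (2:ℕ)^b = t := ⟨_, rfl⟩
    obtain ⟨tc, htc⟩ : ∃ t, (2:ℕ)^c = t := ⟨_, rfl⟩
    obtain ⟨td, htd⟩ : ∃ t, (2:ℕ)^d = t := ⟨_, rfl⟩
    obtain ⟨te, hte⟩ : ∃ t, (2:ℕ)^e = t := ⟨_, rfl⟩
    rw [hta, htb, htc, htd, hte] at h67
    have ha : a < 7 := by apply exp7; rw [hta]; omega
    have hb : b < 7 := by apply exp7; rw [htb]; omega
    have hc : c < 7 := by apply exp7; rw [htc]; omega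
    have hd : d < 7 := by apply exp7; rw [htd]; omega
    have he : e < 7 := by apply exp7; rw [hte]; omega
    have harg : 2^a + 2^b + 2^c + 2^d + 2^e = 67 := by rw [hta, htb, htc, htd, hte]; omega
    have hD := caseD ⟨a, ha⟩ ⟨b, hb⟩ ⟨c, hc⟩ ⟨d, hd⟩ ⟨e, he⟩ (by simpa using harg)
    simp only [Fin.val_mk] at hD
    have hrepr : (a ::ₘ b ::ₘ c ::ₘ d ::ₘ e ::ₘ (0:Multiset ℕ)) = ({a,b,c,d,e} : Multiset ℕ) := rfl
    rcases hD with h' | h'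
    · right; right; left
      rw [hrepr, h']
    · right; right; right
      rw [hrepr, h']

-- ## Bridge between `Finsupp.weight` and multiset sums

lemma weight_eq_sum (w : Gen → ℕ) (f : Gen →₀ ℕ) :
    ((Finsupp.toMultiset f).map w).sum = Finsupp.weight w f := by
  induction f using Finsupp.induction with
  | zero => simp
  | single_add a n f hna hn ih =>
    rw [Finsupp.toMultiset_add, Multiset.map_add, Multiset.sum_add, ih, map_add]
    congr 1
    rw [Finsupp.toMultiset_single, Multiset.nsmul_singleton, Multiset.map_replicate,
      Multiset.sum_replicate, Finsupp.weight_apply, Finsupp.sum_single_index]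
    simp

-- ## The four bidegree (5,67) monomials

lemma monomial_cases (σ : Gen →₀ ℕ) (hw5 : Finsupp.weight hdeg σ = 5)
    (hw67 : Finsupp.weight ideg σ = 67) :
    (monomial σ 1 : P) = X (Gen.H1 0) ∨
    (monomial σ 1 : P) = X (Gen.h 1) * X (Gen.D3 0) ∨
    (monomial σ 1 : P) = X (Gen.h 0) ^ 3 * X (Gen.h 5) ^ 2 ∨
    (monomial σ 1 : P) = X (Gen.h 0) * X (Gen.h 1) * X (Gen.h 4) ^ 2 * X (Gen.h 5) := by
  have h5 : ((Finsupp.toMultiset σ).map hdeg).sum = 5 := by rw [weight_eq_sum]; exact hw5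
  have h67 : ((Finsupp.toMultiset σ).map ideg).sum = 67 := by rw [weight_eq_sum]; exact hw67
  rcases classify _ h5 h67 with hM | hM | hM | hM
  · left
    have hσ : σ = Finsupp.single (Gen.H1 0) 1 := by
      rw [Finsupp.toMultiset_eq_iff.mp hM, Multiset.toFinsupp_singleton]
    rw [hσ, ← X_pow_eq_monomial, pow_one]
  · right; left
    have hσ : σ = Finsupp.single (Gen.h 1) 1 + Finsupp.single (Gen.D3 0) 1 := by
      rw [Finsupp.toMultiset_eq_iff.mp hM]
      rw [Multiset.toFinsupp_eq_iff]
      rw [Finsupp.toMultiset_add, Finsupp.toMultiset_single, Finsupp.toMultiset_single]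
      decide
    rw [hσ]
    rw [← pow_one (X (Gen.h 1) : P), ← pow_one (X (Gen.D3 0) : P), X_pow_eq_monomial,
      X_pow_eq_monomial, monomial_mul, one_mul]
  · right; right; left
    have hσ : σ = Finsupp.single (Gen.h 0) 3 + Finsupp.single (Gen.h 5) 2 := by
      rw [Finsupp.toMultiset_eq_iff.mp hM]
      rw [Multiset.toFinsupp_eq_iff]
      rw [Finsupp.toMultiset_add, Finsupp.toMultiset_single, Finsupp.toMultiset_single]
      decide
    rw [hσ, X_pow_eq_monomial, X_pow_eq_monomial, monomial_mul, one_mul]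
  · right; right; right
    have hσ : σ = Finsupp.single (Gen.h 0) 1 + Finsupp.single (Gen.h 1) 1 +
        Finsupp.single (Gen.h 4) 2 + Finsupp.single (Gen.h 5) 1 := by
      rw [Finsupp.toMultiset_eq_iff.mp hM]
      rw [Multiset.toFinsupp_eq_iff]
      rw [Finsupp.toMultiset_add, Finsupp.toMultiset_add, Finsupp.toMultiset_add,
        Finsupp.toMultiset_single, Finsupp.toMultiset_single, Finsupp.toMultiset_single,
        Finsupp.toMultiset_single]
      decide
    rw [hσ]
    rw [← pow_one (X (Gen.h 0) : P), ← pow_one (X (Gen.h 1) : P), ← pow_one (X (Gen.h 5) : P),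
      X_pow_eq_monomial, X_pow_eq_monomial, X_pow_eq_monomial, X_pow_eq_monomial,
      monomial_mul, monomial_mul, monomial_mul]
    simp

-- ## The first relation and vanishing of the fourth monomial

lemma rel01_mem : (X (Gen.h 0) * X (Gen.h 1) : P) ∈ rels := by
  refine Set.mem_iUnion.mpr ⟨0, ?_⟩
  exact Set.mem_insert _ _

lemma mkE_mk (p : P) : mkE p = Ideal.Quotient.mk relIdeal p := rfl

lemma rel01 : mkE (X (Gen.h 0) * X (Gen.h 1)) = 0 := by
  rw [mkE_mk]
  exact Ideal.Quotient.eq_zero_iff_mem.mpr (Ideal.subset_span rel01_mem)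

lemma zero4 : mkE (X (Gen.h 0) * X (Gen.h 1) * X (Gen.h 4) ^ 2 * X (Gen.h 5)) = 0 := by
  have e : (X (Gen.h 0) * X (Gen.h 1) * X (Gen.h 4) ^ 2 * X (Gen.h 5) : P) =
      (X (Gen.h 0) * X (Gen.h 1)) * (X (Gen.h 4) ^ 2 * X (Gen.h 5)) := by ring
  rw [e, map_mul, rel01, zero_mul]

-- ## Homogeneity facts

lemma IWH_pow {w : Gen → ℕ} {φ : P} {m : ℕ} (h : IsWeightedHomogeneous w φ m) (k : ℕ) :
    IsWeightedHomogeneous w (φ ^ k) (k * m) := by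
  induction k with
  | zero => simpa using isWeightedHomogeneous_one (ZMod 2) w
  | succ k ih =>
    rw [pow_succ, Nat.succ_mul]
    exact ih.mul h

lemma memc1 : (X (Gen.H1 0) : P) ∈
    weightedHomogeneousSubmodule (ZMod 2) hdeg 5 ⊓ weightedHomogeneousSubmodule (ZMod 2) ideg 67 := by
  refine Submodule.mem_inf.mpr ⟨?_, ?_⟩ <;> rw [mem_weightedHomogeneousSubmodule]
  · have h := isWeightedHomogeneous_X (ZMod 2) hdeg (Gen.H1 0)
    have e : hdeg (Gen.H1 0) = 5 := by decide
    exact e ▸ h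
  · have h := isWeightedHomogeneous_X (ZMod 2) ideg (Gen.H1 0)
    have e : ideg (Gen.H1 0) = 67 := by decide
    exact e ▸ h

lemma memc2 : (X (Gen.h 0) ^ 3 * X (Gen.h 5) ^ 2 : P) ∈
    weightedHomogeneousSubmodule (ZMod 2) hdeg 5 ⊓ weightedHomogeneousSubmodule (ZMod 2) ideg 67 := by
  refine Submodule.mem_inf.mpr ⟨?_, ?_⟩ <;> rw [mem_weightedHomogeneousSubmodule]
  · have h := (IWH_pow (isWeightedHomogeneous_X (ZMod 2) hdeg (Gen.h 0)) 3).mul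
      (IWH_pow (isWeightedHomogeneous_X (ZMod 2) hdeg (Gen.h 5)) 2)
    have e : 3 * hdeg (Gen.h 0) + 2 * hdeg (Gen.h 5) = 5 := by decide
    exact e ▸ h
  · have h := (IWH_pow (isWeightedHomogeneous_X (ZMod 2) ideg (Gen.h 0)) 3).mul
      (IWH_pow (isWeightedHomogeneous_X (ZMod 2) ideg (Gen.h 5)) 2)
    have e : 3 * ideg (Gen.h 0) + 2 * ideg (Gen.h 5) = 67 := by decide
    exact e ▸ h

lemma memc3 : (X (Gen.h 1) * X (Gen.D3 0) : P) ∈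
    weightedHomogeneousSubmodule (ZMod 2) hdeg 5 ⊓ weightedHomogeneousSubmodule (ZMod 2) ideg 67 := by
  refine Submodule.mem_inf.mpr ⟨?_, ?_⟩ <;> rw [mem_weightedHomogeneousSubmodule]
  · have h := (isWeightedHomogeneous_X (ZMod 2) hdeg (Gen.h 1)).mul
      (isWeightedHomogeneous_X (ZMod 2) hdeg (Gen.D3 0))
    have e : hdeg (Gen.h 1) + hdeg (Gen.D3 0) = 5 := by decide
    exact e ▸ h
  · have h := (isWeightedHomogeneous_X (ZMod 2) ideg (Gen.h 1)).mul
      (isWeightedHomogeneous_X (ZMod 2) ideg (Gen.D3 0))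
    have e : ideg (Gen.h 1) + ideg (Gen.D3 0) = 67 := by decide
    exact e ▸ h


-- ## Evaluation homomorphisms detecting the three classes

abbrev R2 := Polynomial (ZMod 2) ⧸ Ideal.span ({(Polynomial.X : Polynomial (ZMod 2)) ^ 3} : Set (Polynomial (ZMod 2)))

def θ : R2 := Ideal.Quotient.mk _ Polynomial.X

lemma θ_pow (k : ℕ) : θ ^ k = Ideal.Quotient.mk _ ((Polynomial.X : Polynomial (ZMod 2)) ^ k) := by
  rw [θ, map_pow]

lemma θ3 : θ ^ 3 = 0 := by
  rw [θ_pow]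
  exact Ideal.Quotient.eq_zero_iff_mem.mpr (Ideal.subset_span rfl)

lemma θ2ne : θ ^ 2 ≠ 0 := by
  intro h
  rw [θ_pow] at h
  have hmem := Ideal.Quotient.eq_zero_iff_mem.mp h
  have hdvd := Ideal.mem_span_singleton.mp hmem
  have hle := Polynomial.natDegree_le_of_dvd hdvd (pow_ne_zero 2 Polynomial.X_ne_zero)
  simp [Polynomial.natDegree_pow, Polynomial.natDegree_X] at hle

def v1 : Gen → ZMod 2 := fun g => if g = Gen.H1 0 then 1 else 0
def v2 : Gen → R2 := fun g => if g = Gen.h 0 then 1 else if g = Gen.h 5 then θ else 0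
def v3 : Gen → R2 := fun g => if g = Gen.h 1 then θ else if g = Gen.D3 0 then θ else 0

set_option maxHeartbeats 2000000 in
lemma kill1 : ∀ r ∈ rels, (aeval v1 : P →ₐ[ZMod 2] ZMod 2) r = 0 := by
  intro r hr
  simp only [rels, Set.mem_iUnion, Set.mem_insert_iff, Set.mem_singleton_iff] at hr
  obtain ⟨j, hr⟩ := hr
  rcases hr with rfl|rfl|rfl|rfl|rfl|rfl|rfl|rfl|rfl|rfl|rfl|rfl|rfl|rfl|rfl|rfl|rfl|rfl|rfl|rfl|rfl|rfl|rfl|rfl|rfl|rfl|rfl|rfl|rfl|rfl|rfl|rfl|rfl|rfl|rfl|rfl|rfl|rfl|rfl|rfl|rfl|rfl|rfl|rfl|rfl|rfl|rfl <;> simp [v1]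

set_option maxHeartbeats 2000000 in
lemma kill2 : ∀ r ∈ rels, (aeval v2 : P →ₐ[ZMod 2] R2) r = 0 := by
  intro r hr
  simp only [rels, Set.mem_iUnion, Set.mem_insert_iff, Set.mem_singleton_iff] at hr
  obtain ⟨j, hr⟩ := hr
  rcases hr with rfl|rfl|rfl|rfl|rfl|rfl|rfl|rfl|rfl|rfl|rfl|rfl|rfl|rfl|rfl|rfl|rfl|rfl|rfl|rfl|rfl|rfl|rfl|rfl|rfl|rfl|rfl|rfl|rfl|rfl|rfl|rfl|rfl|rfl|rfl|rfl|rfl|rfl|rfl|rfl|rfl|rfl|rfl|rfl|rfl|rfl|rfl <;>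
    (simp only [map_mul, map_sub, map_pow, aeval_X, v2]
     split_ifs <;> simp_all [θ3])

set_option maxHeartbeats 2000000 in
lemma kill3 : ∀ r ∈ rels, (aeval v3 : P →ₐ[ZMod 2] R2) r = 0 := by
  intro r hr
  simp only [rels, Set.mem_iUnion, Set.mem_insert_iff, Set.mem_singleton_iff] at hr
  obtain ⟨j, hr⟩ := hr
  rcases hr with rfl|rfl|rfl|rfl|rfl|rfl|rfl|rfl|rfl|rfl|rfl|rfl|rfl|rfl|rfl|rfl|rfl|rfl|rfl|rfl|rfl|rfl|rfl|rfl|rfl|rfl|rfl|rfl|rfl|rfl|rfl|rfl|rfl|rfl|rfl|rfl|rfl|rfl|rfl|rfl|rfl|rfl|rfl|rfl|rfl|rfl|rfl <;>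
    (simp only [map_mul, map_sub, map_pow, aeval_X, v3]
     split_ifs <;> simp_all [θ3])

lemma lift_aux {R : Type*} [CommRing R] [Algebra (ZMod 2) R] (f : P →ₐ[ZMod 2] R)
    (h : ∀ r ∈ rels, f r = 0) : ∀ a ∈ relIdeal, f a = 0 := by
  intro a ha
  have hle : relIdeal ≤ RingHom.ker f.toRingHom :=
    Ideal.span_le.mpr (fun r hr => RingHom.mem_ker.mpr (h r hr))
  exact RingHom.mem_ker.mp (hle ha)

def Φ1 : E' →ₐ[ZMod 2] ZMod 2 := Ideal.Quotient.liftₐ relIdeal (aeval v1) (lift_aux _ kill1)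
def Φ2 : E' →ₐ[ZMod 2] R2 := Ideal.Quotient.liftₐ relIdeal (aeval v2) (lift_aux _ kill2)
def Φ3 : E' →ₐ[ZMod 2] R2 := Ideal.Quotient.liftₐ relIdeal (aeval v3) (lift_aux _ kill3)

lemma Φ1_mk (p : P) : Φ1 (mkE p) = aeval v1 p := rfl
lemma Φ2_mk (p : P) : Φ2 (mkE p) = aeval v2 p := rfl
lemma Φ3_mk (p : P) : Φ3 (mkE p) = aeval v3 p := rfl

lemma Φ1a : Φ1 (mkE (X (Gen.H1 0))) = 1 := by rw [Φ1_mk]; simp [v1]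
lemma Φ1b : Φ1 (mkE (X (Gen.h 0) ^ 3 * X (Gen.h 5) ^ 2)) = 0 := by rw [Φ1_mk]; simp [v1]
lemma Φ1c : Φ1 (mkE (X (Gen.h 1) * X (Gen.D3 0))) = 0 := by rw [Φ1_mk]; simp [v1]
lemma Φ2a : Φ2 (mkE (X (Gen.H1 0))) = 0 := by rw [Φ2_mk]; simp [v2]
lemma Φ2b : Φ2 (mkE (X (Gen.h 0) ^ 3 * X (Gen.h 5) ^ 2)) = θ ^ 2 := by rw [Φ2_mk]; simp [v2]
lemma Φ2c : Φ2 (mkE (X (Gen.h 1) * X (Gen.D3 0))) = 0 := by rw [Φ2_mk]; simp [v2]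
lemma Φ3a : Φ3 (mkE (X (Gen.H1 0))) = 0 := by rw [Φ3_mk]; simp [v3]
lemma Φ3b : Φ3 (mkE (X (Gen.h 0) ^ 3 * X (Gen.h 5) ^ 2)) = 0 := by rw [Φ3_mk]; simp [v3]
lemma Φ3c : Φ3 (mkE (X (Gen.h 1) * X (Gen.D3 0))) = θ ^ 2 := by
  rw [Φ3_mk]; simp [v3, sq]

/-- `E′^{5,67}` is three-dimensional over `F₂` with basis the classes of `H₁(0)`, `h₀³h₅²`
and `h₁D₃(0)` (which are in particular linearly independent), while `h₀h₁h₄²h₅ = 0` in `E′`. -/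
theorem stmt9 :
    component 5 67 = Submodule.span (ZMod 2)
        {mkE (X (Gen.H1 0)),
         mkE (X (Gen.h 0) ^ 3 * X (Gen.h 5) ^ 2),
         mkE (X (Gen.h 1) * X (Gen.D3 0))} ∧
      LinearIndependent (ZMod 2)
        ![mkE (X (Gen.H1 0)),
          mkE (X (Gen.h 0) ^ 3 * X (Gen.h 5) ^ 2),
          mkE (X (Gen.h 1) * X (Gen.D3 0))] ∧
      mkE (X (Gen.h 0) * X (Gen.h 1) * X (Gen.h 4) ^ 2 * X (Gen.h 5)) = 0 := by
  have two_cases : ∀ c : ZMod 2, c = 0 ∨ c = 1 := by decide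
  refine ⟨?_, ?_, zero4⟩
  · apply le_antisymm
    · rintro x hx
      obtain ⟨p, hp, rfl⟩ := Submodule.mem_map.mp hx
      obtain ⟨hp5, hp67⟩ := Submodule.mem_inf.mp hp
      rw [mem_weightedHomogeneousSubmodule] at hp5 hp67
      simp only [AlgHom.toLinearMap_apply]
      rw [p.as_sum, map_sum]
      apply Submodule.sum_mem
      intro σ hσ
      have hc : coeff σ p ≠ 0 := MvPolynomial.mem_support_iff.mp hσ
      have hmono : (monomial σ (coeff σ p) : P) = (coeff σ p) • (monomial σ 1) := by
        rw [MvPolynomial.smul_monomial, smul_eq_mul, mul_one]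
      rw [hmono, map_smul]
      apply Submodule.smul_mem
      have hw5 : Finsupp.weight hdeg σ = 5 := hp5 hc
      have hw67 : Finsupp.weight ideg σ = 67 := hp67 hc
      rcases monomial_cases σ hw5 hw67 with h | h | h | h <;> rw [h]
      · exact Submodule.subset_span (Set.mem_insert _ _)
      · exact Submodule.subset_span (by right; right; exact rfl)
      · exact Submodule.subset_span (by right; left; exact rfl)
      · rw [zero4]; exact Submodule.zero_mem _
    · rw [Submodule.span_le]
      rintro y hy
      simp only [Set.mem_insert_iff, Set.mem_singleton_iff] at hy
      rcases hy with rfl | rfl | rfl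
      · exact Submodule.mem_map.mpr ⟨_, memc1, rfl⟩
      · exact Submodule.mem_map.mpr ⟨_, memc2, rfl⟩
      · exact Submodule.mem_map.mpr ⟨_, memc3, rfl⟩
  · rw [Fintype.linearIndependent_iff]
    intro g hg
    rw [Fin.sum_univ_three] at hg
    simp only [Matrix.cons_val_zero, Matrix.cons_val_one, Matrix.head_cons,
      Matrix.cons_val_two, Matrix.tail_cons] at hg
    have hg0 : g 0 = 0 := by
      have h1 := congrArg Φ1 hg
      simp only [map_add, map_smul, map_zero, Φ1a, Φ1b, Φ1c, smul_zero, add_zero,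
        smul_eq_mul, mul_one, mul_zero, zero_add] at h1
      simpa using h1
    have hg1 : g 1 = 0 := by
      have h1 := congrArg Φ2 hg
      simp only [map_add, map_smul, map_zero, Φ2a, Φ2b, Φ2c, smul_zero, add_zero,
        zero_add] at h1
      rcases two_cases (g 1) with h | h
      · exact h
      · rw [h, one_smul] at h1
        exact absurd h1 θ2ne
    have hg2 : g 2 = 0 := by
      have h1 := congrArg Φ3 hg
      simp only [map_add, map_smul, map_zero, Φ3a, Φ3b, Φ3c, smul_zero, add_zero,
        zero_add] at h1
      rcases two_cases (g 2) with h | h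
      · exact h
      · rw [h, one_smul] at h1
        exact absurd h1 θ2ne
    intro i
    fin_cases i
    · exact hg0
    · exact hg1
    · exact hg2
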